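/- Let G = ⟨a,b | aᵐ = b² = 1, b⁻¹ab = a⁻¹⟩ be the dihedral group of order 2m with m odd, and let ψ be a normalized {±1}-valued 2-cocycle on G which is not a coboundary. Then, indexing rows and columns by 1, a, ..., a^{m-1}, b, ab, ..., a^{m-1}b, the matrix M_ψ = [ψ(g,h)] is normal: M_ψ M_ψᵀ = M_ψᵀ M_ψ. -/
import Mathlib

open Matrix

namespace Stmt18Aux

open DihedralGroup

variable {m : ℕ}

/-- A ±1 integer as a unit. -/
def sgn (x : ℤ) : ℤˣ := if x = 1 then 1 else -1

lemma sgn_coe {x : ℤ} (h : x = 1 ∨ x = -1) : ((sgn x : ℤˣ) : ℤ) = x := by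
  rcases h with h | h <;> simp [sgn, h]

/-- The carrier of the central extension of the dihedral group by `±1`
determined by a cocycle. -/
structure Ext (m : ℕ) where
  g : DihedralGroup m
  s : ℤˣ

lemma Ext.ext' {a b : Ext m} (h1 : a.g = b.g) (h2 : a.s = b.s) : a = b := by
  cases a; cases b; simp_all

@[simp] lemma Ext.g_mk (g : DihedralGroup m) (s : ℤˣ) : (Ext.mk g s).g = g := rfl
@[simp] lemma Ext.s_mk (g : DihedralGroup m) (s : ℤˣ) : (Ext.mk g s).s = s := rfl

variable (ψ : DihedralGroup m → DihedralGroup m → ℤ)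

/-- The unit-valued version of the cocycle. -/
def ψu (g h : DihedralGroup m) : ℤˣ := sgn (ψ g h)

lemma ψu_coe (hval : ∀ g h, ψ g h = 1 ∨ ψ g h = -1) (g h : DihedralGroup m) :
    ((ψu ψ g h : ℤˣ) : ℤ) = ψ g h :=
  sgn_coe (hval g h)

lemma ψu_one_left (hval : ∀ g h, ψ g h = 1 ∨ ψ g h = -1)
    (h1g : ∀ g, ψ 1 g = 1) (g : DihedralGroup m) : ψu ψ 1 g = 1 := by
  apply Units.ext
  rw [ψu_coe ψ hval, h1g g]
  rfl

lemma ψu_one_right (hval : ∀ g h, ψ g h = 1 ∨ ψ g h = -1)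
    (hg1 : ∀ g, ψ g 1 = 1) (g : DihedralGroup m) : ψu ψ g 1 = 1 := by
  apply Units.ext
  rw [ψu_coe ψ hval, hg1 g]
  rfl

/-- The group structure on the extension. -/
def extGroup (hval : ∀ g h, ψ g h = 1 ∨ ψ g h = -1)
    (h1g : ∀ g, ψ 1 g = 1) (hg1 : ∀ g, ψ g 1 = 1)
    (hcoc : ∀ g h k, ψ g h * ψ (g * h) k = ψ g (h * k) * ψ h k) : Group (Ext m) where
  mul a b := ⟨a.g * b.g, ψu ψ a.g b.g * a.s * b.s⟩
  one := ⟨1, 1⟩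
  inv a := ⟨a.g⁻¹, ψu ψ a.g⁻¹ a.g * a.s⟩
  mul_assoc a b c := by
    refine Ext.ext' (mul_assoc _ _ _) ?_
    show ψu ψ (a.g * b.g) c.g * (ψu ψ a.g b.g * a.s * b.s) * c.s =
      ψu ψ a.g (b.g * c.g) * a.s * (ψu ψ b.g c.g * b.s * c.s)
    apply Units.ext
    push_cast [ψu_coe ψ hval]
    linear_combination ((a.s : ℤ) * b.s * c.s) * hcoc a.g b.g c.g
  one_mul a := by
    refine Ext.ext' (one_mul _) ?_
    show ψu ψ 1 a.g * 1 * a.s = a.s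
    rw [ψu_one_left ψ hval h1g]
    simp
  mul_one a := by
    refine Ext.ext' (mul_one _) ?_
    show ψu ψ a.g 1 * a.s * 1 = a.s
    rw [ψu_one_right ψ hval hg1]
    simp
  inv_mul_cancel a := by
    refine Ext.ext' (inv_mul_cancel _) ?_
    show ψu ψ a.g⁻¹ a.g * (ψu ψ a.g⁻¹ a.g * a.s) * a.s = 1
    apply Units.ext
    push_cast
    linear_combination ((a.s : ℤ) * a.s) * Int.units_coe_mul_self (ψu ψ a.g⁻¹ a.g) +
      Int.units_coe_mul_self a.s

/-- Splitting a sum over the dihedral group into rotations and reflections. -/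
lemma sum_split [NeZero m] (f : DihedralGroup m → ℤ) :
    ∑ k, f k = (∑ i, f (r i)) + ∑ i, f (sr i) := by
  let e : ZMod m ⊕ ZMod m ≃ DihedralGroup m :=
    { toFun := fun x => Sum.elim r sr x
      invFun := fun g => match g with
        | r j => Sum.inl j
        | sr j => Sum.inr j
      left_inv := by rintro (x | x) <;> rfl
      right_inv := by rintro (x | x) <;> rfl }
  rw [← Equiv.sum_comp e f, Fintype.sum_sum_type]
  rfl

end Stmt18Aux

open Stmt18Aux DihedralGroup in
/-- Any normalized ±1 cocycle on the dihedral group (`m` odd) is, up to a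
coboundary `φ`, either trivial or the standard non-trivial cocycle. -/
theorem stmt18_exists_phi {m : ℕ} [NeZero m] (hm : Odd m)
    (ψ : DihedralGroup m → DihedralGroup m → ℤ)
    (hval : ∀ g h, ψ g h = 1 ∨ ψ g h = -1)
    (hnorm : ψ 1 1 = 1)
    (hcoc : ∀ g h k, ψ g h * ψ (g * h) k = ψ g (h * k) * ψ h k) :
    ∃ (t : ℤ) (φ : DihedralGroup m → ℤ), (t = 1 ∨ t = -1) ∧ φ 1 = 1 ∧
      (∀ g, φ g = 1 ∨ φ g = -1) ∧
      (∀ i j, ψ (r i) (r j) = φ (r i) * φ (r j) * φ (r (i + j))) ∧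
      (∀ i j, ψ (r i) (sr j) = φ (r i) * φ (sr j) * φ (sr (j - i))) ∧
      (∀ i j, ψ (sr i) (r j) = φ (sr i) * φ (r j) * φ (sr (i + j))) ∧
      (∀ i j, ψ (sr i) (sr j) = t * (φ (sr i) * φ (sr j) * φ (r (j - i)))) := by
  have hsq : ∀ g h, ψ g h * ψ g h = 1 := by
    intro g h; rcases hval g h with h' | h' <;> rw [h'] <;> norm_num
  have hg1 : ∀ g, ψ g 1 = 1 := by
    intro g
    have h := hcoc g 1 1
    simp only [mul_one, one_mul] at h
    rw [hnorm, mul_one] at h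
    linarith [hsq g 1]
  have h1g : ∀ g, ψ 1 g = 1 := by
    intro g
    have h := hcoc 1 1 g
    simp only [one_mul] at h
    rw [hnorm, one_mul] at h
    linarith [hsq 1 g]
  letI : Group (Ext m) := extGroup ψ hval h1g hg1 hcoc
  have hmulg : ∀ e f : Ext m, (e * f).g = e.g * f.g := fun _ _ => rfl
  have hmuls : ∀ e f : Ext m, (e * f).s = ψu ψ e.g f.g * e.s * f.s := fun _ _ => rfl
  have hones : (1 : Ext m).s = 1 := rfl
  have hg_pow : ∀ (a : Ext m) (n : ℕ), (a ^ n).g = a.g ^ n := by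
    intro a n
    induction n with
    | zero => rw [pow_zero, pow_zero]; rfl
    | succ n ih => rw [pow_succ, pow_succ, hmulg, ih]
  -- central elements
  have hcen : ∀ (s : ℤˣ) (e : Ext m), (⟨1, s⟩ : Ext m) * e = e * ⟨1, s⟩ := by
    intro s e
    refine Ext.ext' ?_ ?_
    · rw [hmulg, hmulg]; simp
    · rw [hmuls, hmuls]
      simp only [Ext.g_mk, Ext.s_mk]
      rw [ψu_one_left ψ hval h1g, ψu_one_right ψ hval hg1]
      apply Units.ext; push_cast; ring
  have hzpow : ∀ (s : ℤˣ) (n : ℕ), ((⟨1, s⟩ : Ext m)) ^ n = ⟨1, s ^ n⟩ := by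
    intro s n
    induction n with
    | zero => rw [pow_zero, pow_zero]; rfl
    | succ n ih =>
      rw [pow_succ, ih]
      refine Ext.ext' ?_ ?_
      · rw [hmulg]; simp
      · rw [hmuls]
        simp only [Ext.g_mk, Ext.s_mk]
        rw [ψu_one_left ψ hval h1g, one_mul, pow_succ]
  have hsplit : ∀ (gg : DihedralGroup m) (x : ℤˣ),
      (⟨gg, x⟩ : Ext m) = (⟨1, x⟩ : Ext m) * ⟨gg, 1⟩ := by
    intro gg x
    refine (Ext.ext' ?_ ?_).symm
    · rw [hmulg]; simp
    · rw [hmuls]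
      simp only [Ext.g_mk, Ext.s_mk]
      rw [ψu_one_left ψ hval h1g, one_mul, mul_one]
  have hs_pow : ∀ (gg : DihedralGroup m) (x : ℤˣ) (n : ℕ),
      ((⟨gg, x⟩ : Ext m) ^ n).s = x ^ n * ((⟨gg, 1⟩ : Ext m) ^ n).s := by
    intro gg x n
    rw [hsplit gg x, (Commute.mul_pow (hcen x _)), hzpow, hmuls]
    simp only [Ext.g_mk, Ext.s_mk]
    rw [ψu_one_left ψ hval h1g, one_mul]
  have odd_upow : ∀ u : ℤˣ, u ^ m = u := by
    intro u
    obtain ⟨k, hk⟩ := hm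
    rw [hk, pow_add, pow_mul, Int.units_sq, one_pow, one_mul, pow_one]
  -- the normalized lift `A` of the rotation and the lift `B` of the reflection
  set μ : ℤˣ := ((⟨r 1, 1⟩ : Ext m) ^ m).s with hμ
  set A : Ext m := ⟨r 1, μ⟩ with hAdef
  have hA : A ^ m = 1 := by
    refine Ext.ext' ?_ ?_
    · rw [hg_pow]
      show (r (1 : ZMod m)) ^ m = (1 : DihedralGroup m)
      exact r_one_pow_n
    · show ((⟨r 1, μ⟩ : Ext m) ^ m).s = (1 : ℤˣ)
      rw [hs_pow, ← hμ, odd_upow, Int.units_mul_self]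
  set B : Ext m := ⟨sr 0, 1⟩ with hBdef
  set tu : ℤˣ := ψu ψ (sr 0) (sr 0) with htu
  have hBB : B * B = (⟨1, tu⟩ : Ext m) := by
    refine Ext.ext' ?_ ?_
    · show (sr (0 : ZMod m)) * sr 0 = (1 : DihedralGroup m)
      rw [sr_mul_sr, sub_zero, one_def]
    · show ψu ψ (sr 0) (sr 0) * 1 * 1 = tu
      rw [mul_one, mul_one]
  have hBinvg : (B⁻¹).g = sr 0 := rfl
  have hwg : (B * A * B⁻¹ * A).g = 1 := by
    rw [hmulg, hmulg, hmulg, hBinvg]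
    show (sr (0 : ZMod m)) * r 1 * sr 0 * r 1 = 1
    rw [sr_mul_r, sr_mul_sr, r_mul_r]
    rw [show ((0 : ZMod m) - (0 + 1) + 1 = 0) by ring, one_def]
  set η : ℤˣ := (B * A * B⁻¹ * A).s with hη
  have hw : B * A * B⁻¹ * A = (⟨1, η⟩ : Ext m) := Ext.ext' hwg rfl
  have hBAB : B * A * B⁻¹ = (⟨1, η⟩ : Ext m) * A⁻¹ := by
    rw [← hw]; group
  have hη1 : η = 1 := by
    have h1 : (B * A * B⁻¹) ^ m = 1 := by
      rw [conj_pow, hA, mul_one, mul_inv_cancel]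
    rw [hBAB, (Commute.mul_pow (hcen η A⁻¹)), hzpow, inv_pow, hA, inv_one, mul_one,
      odd_upow] at h1
    have h2 := congrArg Ext.s h1
    simpa [hones] using h2
  have hBAB' : B * A * B⁻¹ = A⁻¹ := by
    rw [hBAB, hη1]
    have h1 : ((⟨1, 1⟩ : Ext m)) = 1 := rfl
    rw [h1, one_mul]
  have hBpow : ∀ n : ℕ, B * A ^ n * B⁻¹ = (A ^ n)⁻¹ := by
    intro n; rw [← conj_pow, hBAB', inv_pow]
  -- the exponential map
  set Λ : ZMod m → Ext m := fun i => A ^ i.val with hΛdef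
  have hmod : ∀ n : ℕ, A ^ (n % m) = A ^ n := by
    intro n
    conv_rhs => rw [← Nat.div_add_mod n m]
    rw [pow_add, pow_mul, hA, one_pow, one_mul]
  have hΛadd : ∀ i j : ZMod m, Λ (i + j) = Λ i * Λ j := by
    intro i j
    show A ^ (i + j).val = A ^ i.val * A ^ j.val
    rw [ZMod.val_add, hmod, pow_add]
  have hΛ0 : Λ 0 = 1 := by
    show A ^ (0 : ZMod m).val = 1
    rw [ZMod.val_zero, pow_zero]
  have hΛinv : ∀ i : ZMod m, Λ (-i) = (Λ i)⁻¹ := by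
    intro i
    have h1 : Λ (-i) * Λ i = 1 := by rw [← hΛadd, neg_add_cancel, hΛ0]
    exact eq_inv_of_mul_eq_one_left h1
  have hΛg : ∀ i : ZMod m, (Λ i).g = r i := by
    intro i
    show (A ^ i.val).g = r i
    rw [hg_pow]
    show (r (1 : ZMod m)) ^ i.val = r i
    rw [r_one_pow]
    exact congrArg r (ZMod.natCast_rightInverse i)
  have hBΛ : ∀ i : ZMod m, B * Λ i = Λ (-i) * B := by
    intro i
    have h1 : B * Λ i * B⁻¹ = (Λ i)⁻¹ := hBpow i.val
    rw [hΛinv]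
    calc B * Λ i = B * Λ i * B⁻¹ * B := by group
    _ = (Λ i)⁻¹ * B := by rw [h1]
  -- the section
  set Φ : DihedralGroup m → Ext m := fun g =>
    match g with
    | r i => Λ i
    | sr i => Λ (-i) * B with hΦdef
  have hΦr : ∀ i, Φ (r i) = Λ i := fun _ => rfl
  have hΦsr : ∀ i, Φ (sr i) = Λ (-i) * B := fun _ => rfl
  have hΦg : ∀ g, (Φ g).g = g := by
    rintro (i | i)
    · rw [hΦr, hΛg]
    · rw [hΦsr, hmulg, hΛg]
      show (r (-i)) * sr 0 = sr i
      rw [r_mul_sr]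
      exact congrArg sr (by ring)
  -- the four multiplication identities for the section
  have case1 : ∀ i j, Φ (r i) * Φ (r j) = Φ (r (i + j)) := by
    intro i j; rw [hΦr, hΦr, hΦr, hΛadd]
  have case2 : ∀ i j, Φ (r i) * Φ (sr j) = Φ (sr (j - i)) := by
    intro i j
    rw [hΦr, hΦsr, hΦsr, ← mul_assoc, ← hΛadd]
    rw [show i + -j = -(j - i) by ring]
  have case3 : ∀ i j, Φ (sr i) * Φ (r j) = Φ (sr (i + j)) := by
    intro i j
    rw [hΦsr, hΦr, hΦsr, mul_assoc, hBΛ, ← mul_assoc, ← hΛadd]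
    rw [show -i + -j = -(i + j) by ring]
  have case4 : ∀ i j, Φ (sr i) * Φ (sr j) = (⟨1, tu⟩ : Ext m) * Φ (r (j - i)) := by
    intro i j
    rw [hΦsr, hΦsr, hΦr]
    calc Λ (-i) * B * (Λ (-j) * B) = Λ (-i) * (B * Λ (-j)) * B := by group
    _ = Λ (-i) * (Λ j * B) * B := by rw [hBΛ, neg_neg]
    _ = (Λ (-i) * Λ j) * (B * B) := by group
    _ = Λ (j - i) * (⟨1, tu⟩ : Ext m) := by
          rw [← hΛadd, hBB, show -i + j = j - i by ring]
    _ = (⟨1, tu⟩ : Ext m) * Λ (j - i) := (hcen tu _).symm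
  -- square identities for the φ values
  have us : ∀ g : DihedralGroup m, ((Φ g).s : ℤ) * ((Φ g).s : ℤ) = 1 := by
    intro g
    exact_mod_cast Int.units_coe_mul_self (Φ g).s
  clear_value Φ
  refine ⟨(tu : ℤ), fun g => ((Φ g).s : ℤ), ?_, ?_, ?_, ?_, ?_, ?_, ?_⟩
  · rcases Int.units_eq_one_or tu with h | h <;> rw [h] <;> simp
  · show ((Φ 1).s : ℤ) = 1
    rw [one_def, hΦr, hΛ0, hones]
    rfl
  · intro g
    show ((Φ g).s : ℤ) = 1 ∨ ((Φ g).s : ℤ) = -1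
    rcases Int.units_eq_one_or (Φ g).s with h | h <;> rw [h] <;> simp
  · intro i j
    have e := congrArg Ext.s (case1 i j)
    rw [hmuls] at e
    rw [hΦg _, hΦg _] at e
    have e' := congrArg (fun u : ℤˣ => (u : ℤ)) e
    simp only [Units.val_mul] at e'
    rw [ψu_coe ψ hval] at e'
    show ψ (r i) (r j) = ((Φ (r i)).s : ℤ) * ((Φ (r j)).s : ℤ) * ((Φ (r (i + j))).s : ℤ)
    linear_combination (((Φ (r i)).s : ℤ) * ((Φ (r j)).s : ℤ)) * e'
      - (ψ (r i) (r j) * ((Φ (r j)).s : ℤ) * ((Φ (r j)).s : ℤ)) * us (r i)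
      - ψ (r i) (r j) * us (r j)
  · intro i j
    have e := congrArg Ext.s (case2 i j)
    rw [hmuls] at e
    rw [hΦg _, hΦg _] at e
    have e' := congrArg (fun u : ℤˣ => (u : ℤ)) e
    simp only [Units.val_mul] at e'
    rw [ψu_coe ψ hval] at e'
    show ψ (r i) (sr j) = ((Φ (r i)).s : ℤ) * ((Φ (sr j)).s : ℤ) * ((Φ (sr (j - i))).s : ℤ)
    linear_combination (((Φ (r i)).s : ℤ) * ((Φ (sr j)).s : ℤ)) * e'
      - (ψ (r i) (sr j) * ((Φ (sr j)).s : ℤ) * ((Φ (sr j)).s : ℤ)) * us (r i)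
      - ψ (r i) (sr j) * us (sr j)
  · intro i j
    have e := congrArg Ext.s (case3 i j)
    rw [hmuls] at e
    rw [hΦg _, hΦg _] at e
    have e' := congrArg (fun u : ℤˣ => (u : ℤ)) e
    simp only [Units.val_mul] at e'
    rw [ψu_coe ψ hval] at e'
    show ψ (sr i) (r j) = ((Φ (sr i)).s : ℤ) * ((Φ (r j)).s : ℤ) * ((Φ (sr (i + j))).s : ℤ)
    linear_combination (((Φ (sr i)).s : ℤ) * ((Φ (r j)).s : ℤ)) * e'
      - (ψ (sr i) (r j) * ((Φ (r j)).s : ℤ) * ((Φ (r j)).s : ℤ)) * us (sr i)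
      - ψ (sr i) (r j) * us (r j)
  · intro i j
    have e := congrArg Ext.s (case4 i j)
    rw [hmuls, hmuls] at e
    rw [hΦg, hΦg] at e
    simp only [Ext.g_mk, Ext.s_mk] at e
    rw [hΦg, ψu_one_left ψ hval h1g, one_mul] at e
    have e' := congrArg (fun u : ℤˣ => (u : ℤ)) e
    simp only [Units.val_mul] at e'
    rw [ψu_coe ψ hval] at e'
    show ψ (sr i) (sr j) =
      (tu : ℤ) * (((Φ (sr i)).s : ℤ) * ((Φ (sr j)).s : ℤ) * ((Φ (r (j - i))).s : ℤ))
    linear_combination (((Φ (sr i)).s : ℤ) * ((Φ (sr j)).s : ℤ)) * e'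
      - (ψ (sr i) (sr j) * ((Φ (sr j)).s : ℤ) * ((Φ (sr j)).s : ℤ)) * us (sr i)
      - ψ (sr i) (sr j) * us (sr j)

open Stmt18Aux DihedralGroup in
/-- The key summation identity: normality of the cocyclic matrix for
`ψ = β·∂φ` with `β` the standard non-trivial cocycle. -/
theorem stmt18_keysum {m : ℕ} [NeZero m]
    (ψ : DihedralGroup m → DihedralGroup m → ℤ)
    (φ : DihedralGroup m → ℤ)
    (hsq : ∀ g, φ g * φ g = 1)
    (h1 : ∀ i j, ψ (r i) (r j) = φ (r i) * φ (r j) * φ (r (i + j)))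
    (h2 : ∀ i j, ψ (r i) (sr j) = φ (r i) * φ (sr j) * φ (sr (j - i)))
    (h3 : ∀ i j, ψ (sr i) (r j) = φ (sr i) * φ (r j) * φ (sr (i + j)))
    (h4 : ∀ i j, ψ (sr i) (sr j) = -(φ (sr i) * φ (sr j) * φ (r (j - i)))) :
    ∀ g h, ∑ k, ψ g k * ψ h k = ∑ k, ψ k g * ψ k h := by
  intro g h
  simp only [sum_split]
  rcases g with i | i <;> rcases h with j | j
  · -- g = r i, h = r j
    have L1 : ∑ l, ψ (r i) (r l) * ψ (r j) (r l) = ∑ l, ψ (r l) (r i) * ψ (r l) (r j) := by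
      refine Finset.sum_congr rfl fun l _ => ?_
      rw [h1, h1, h1, h1, add_comm l i, add_comm l j]
      ring
    have L2 : ∑ l, ψ (r i) (sr l) * ψ (r j) (sr l) =
        ∑ l, (φ (r i) * φ (r j)) * (φ (sr (l - i)) * φ (sr (l - j))) := by
      refine Finset.sum_congr rfl fun l _ => ?_
      rw [h2, h2]
      linear_combination (φ (r i) * φ (r j) * φ (sr (l - i)) * φ (sr (l - j))) * hsq (sr l)
    have R2 : ∑ l, ψ (sr l) (r i) * ψ (sr l) (r j) =
        ∑ l, (φ (r i) * φ (r j)) * (φ (sr (l + i)) * φ (sr (l + j))) := by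
      refine Finset.sum_congr rfl fun l _ => ?_
      rw [h3, h3]
      linear_combination (φ (r i) * φ (r j) * φ (sr (l + i)) * φ (sr (l + j))) * hsq (sr l)
    have E : ∑ l, (φ (r i) * φ (r j)) * (φ (sr (l - i)) * φ (sr (l - j))) =
        ∑ l, (φ (r i) * φ (r j)) * (φ (sr (l + i)) * φ (sr (l + j))) := by
      refine Fintype.sum_equiv (Equiv.subRight (i + j)) _ _ fun x => ?_
      simp only [Equiv.subRight_apply]
      rw [show x - (i + j) + i = x - j by ring, show x - (i + j) + j = x - i by ring]
      ring
    rw [L1, L2, E, R2]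
  · -- g = r i, h = sr j : both sides vanish
    have L1 : ∑ l, ψ (r i) (r l) * ψ (sr j) (r l) =
        ∑ l, (φ (r i) * φ (sr j)) * (φ (r (i + l)) * φ (sr (j + l))) := by
      refine Finset.sum_congr rfl fun l _ => ?_
      rw [h1, h3]
      linear_combination (φ (r i) * φ (sr j) * φ (r (i + l)) * φ (sr (j + l))) * hsq (r l)
    have L2 : ∑ l, ψ (r i) (sr l) * ψ (sr j) (sr l) =
        ∑ l, -((φ (r i) * φ (sr j)) * (φ (sr (l - i)) * φ (r (l - j)))) := by
      refine Finset.sum_congr rfl fun l _ => ?_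
      rw [h2, h4]
      linear_combination (-(φ (r i) * φ (sr j) * φ (sr (l - i)) * φ (r (l - j)))) * hsq (sr l)
    have E1 : ∑ l, (φ (r i) * φ (sr j)) * (φ (r (i + l)) * φ (sr (j + l))) =
        ∑ l, (φ (r i) * φ (sr j)) * (φ (sr (l - i)) * φ (r (l - j))) := by
      refine Fintype.sum_equiv (Equiv.addRight (i + j)) _ _ fun x => ?_
      simp only [Equiv.coe_addRight]
      rw [show x + (i + j) - i = x + j by ring, show x + (i + j) - j = x + i by ring]
      ring
    have R1 : ∑ l, ψ (r l) (r i) * ψ (r l) (sr j) =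
        ∑ l, (φ (r i) * φ (sr j)) * (φ (r (l + i)) * φ (sr (j - l))) := by
      refine Finset.sum_congr rfl fun l _ => ?_
      rw [h1, h2]
      linear_combination (φ (r i) * φ (sr j) * φ (r (l + i)) * φ (sr (j - l))) * hsq (r l)
    have R2 : ∑ l, ψ (sr l) (r i) * ψ (sr l) (sr j) =
        ∑ l, -((φ (r i) * φ (sr j)) * (φ (sr (l + i)) * φ (r (j - l)))) := by
      refine Finset.sum_congr rfl fun l _ => ?_
      rw [h3, h4]
      linear_combination (-(φ (r i) * φ (sr j) * φ (sr (l + i)) * φ (r (j - l)))) * hsq (sr l)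
    have E2 : ∑ l, (φ (r i) * φ (sr j)) * (φ (r (l + i)) * φ (sr (j - l))) =
        ∑ l, (φ (r i) * φ (sr j)) * (φ (sr (l + i)) * φ (r (j - l))) := by
      refine Fintype.sum_equiv (Equiv.subLeft (j - i)) _ _ fun x => ?_
      simp only [Equiv.subLeft_apply]
      rw [show j - i - x + i = j - x by ring, show j - (j - i - x) = x + i by ring]
      ring
    rw [L1, L2, Finset.sum_neg_distrib, E1, R1, R2, Finset.sum_neg_distrib, E2]
    rw [add_neg_cancel, add_neg_cancel]
  · -- g = sr i, h = r j : both sides vanish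
    have L1 : ∑ l, ψ (sr i) (r l) * ψ (r j) (r l) =
        ∑ l, (φ (sr i) * φ (r j)) * (φ (sr (i + l)) * φ (r (j + l))) := by
      refine Finset.sum_congr rfl fun l _ => ?_
      rw [h3, h1]
      linear_combination (φ (sr i) * φ (r j) * φ (sr (i + l)) * φ (r (j + l))) * hsq (r l)
    have L2 : ∑ l, ψ (sr i) (sr l) * ψ (r j) (sr l) =
        ∑ l, -((φ (sr i) * φ (r j)) * (φ (r (l - i)) * φ (sr (l - j)))) := by
      refine Finset.sum_congr rfl fun l _ => ?_
      rw [h4, h2]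
      linear_combination (-(φ (sr i) * φ (r j) * φ (r (l - i)) * φ (sr (l - j)))) * hsq (sr l)
    have E1 : ∑ l, (φ (sr i) * φ (r j)) * (φ (sr (i + l)) * φ (r (j + l))) =
        ∑ l, (φ (sr i) * φ (r j)) * (φ (r (l - i)) * φ (sr (l - j))) := by
      refine Fintype.sum_equiv (Equiv.addRight (i + j)) _ _ fun x => ?_
      simp only [Equiv.coe_addRight]
      rw [show x + (i + j) - i = x + j by ring, show x + (i + j) - j = x + i by ring]
      ring
    have R1 : ∑ l, ψ (r l) (sr i) * ψ (r l) (r j) =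
        ∑ l, (φ (sr i) * φ (r j)) * (φ (sr (i - l)) * φ (r (l + j))) := by
      refine Finset.sum_congr rfl fun l _ => ?_
      rw [h2, h1]
      linear_combination (φ (sr i) * φ (r j) * φ (sr (i - l)) * φ (r (l + j))) * hsq (r l)
    have R2 : ∑ l, ψ (sr l) (sr i) * ψ (sr l) (r j) =
        ∑ l, -((φ (sr i) * φ (r j)) * (φ (r (i - l)) * φ (sr (l + j)))) := by
      refine Finset.sum_congr rfl fun l _ => ?_
      rw [h4, h3]
      linear_combination (-(φ (sr i) * φ (r j) * φ (r (i - l)) * φ (sr (l + j)))) * hsq (sr l)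
    have E2 : ∑ l, (φ (sr i) * φ (r j)) * (φ (sr (i - l)) * φ (r (l + j))) =
        ∑ l, (φ (sr i) * φ (r j)) * (φ (r (i - l)) * φ (sr (l + j))) := by
      refine Fintype.sum_equiv (Equiv.subLeft (i - j)) _ _ fun x => ?_
      simp only [Equiv.subLeft_apply]
      rw [show i - (i - j - x) = x + j by ring, show i - j - x + j = i - x by ring]
      ring
    rw [L1, L2, Finset.sum_neg_distrib, E1, R1, R2, Finset.sum_neg_distrib, E2]
    rw [add_neg_cancel, add_neg_cancel]
  · -- g = sr i, h = sr j
    have L1 : ∑ l, ψ (sr i) (r l) * ψ (sr j) (r l) =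
        ∑ l, (φ (sr i) * φ (sr j)) * (φ (sr (i + l)) * φ (sr (j + l))) := by
      refine Finset.sum_congr rfl fun l _ => ?_
      rw [h3, h3]
      linear_combination (φ (sr i) * φ (sr j) * φ (sr (i + l)) * φ (sr (j + l))) * hsq (r l)
    have L2 : ∑ l, ψ (sr i) (sr l) * ψ (sr j) (sr l) =
        ∑ l, (φ (sr i) * φ (sr j)) * (φ (r (l - i)) * φ (r (l - j))) := by
      refine Finset.sum_congr rfl fun l _ => ?_
      rw [h4, h4]
      linear_combination (φ (sr i) * φ (sr j) * φ (r (l - i)) * φ (r (l - j))) * hsq (sr l)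
    have R1 : ∑ l, ψ (r l) (sr i) * ψ (r l) (sr j) =
        ∑ l, (φ (sr i) * φ (sr j)) * (φ (sr (i - l)) * φ (sr (j - l))) := by
      refine Finset.sum_congr rfl fun l _ => ?_
      rw [h2, h2]
      linear_combination (φ (sr i) * φ (sr j) * φ (sr (i - l)) * φ (sr (j - l))) * hsq (r l)
    have R2 : ∑ l, ψ (sr l) (sr i) * ψ (sr l) (sr j) =
        ∑ l, (φ (sr i) * φ (sr j)) * (φ (r (i - l)) * φ (r (j - l))) := by
      refine Finset.sum_congr rfl fun l _ => ?_
      rw [h4, h4]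
      linear_combination (φ (sr i) * φ (sr j) * φ (r (i - l)) * φ (r (j - l))) * hsq (sr l)
    have E1 : ∑ l, (φ (sr i) * φ (sr j)) * (φ (sr (i + l)) * φ (sr (j + l))) =
        ∑ l, (φ (sr i) * φ (sr j)) * (φ (sr (i - l)) * φ (sr (j - l))) := by
      refine Fintype.sum_equiv (Equiv.neg (ZMod m)) _ _ fun x => ?_
      simp only [Equiv.neg_apply]
      rw [show i - -x = i + x by ring, show j - -x = j + x by ring]
    have E2 : ∑ l, (φ (sr i) * φ (sr j)) * (φ (r (l - i)) * φ (r (l - j))) =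
        ∑ l, (φ (sr i) * φ (sr j)) * (φ (r (i - l)) * φ (r (j - l))) := by
      refine Fintype.sum_equiv (Equiv.subLeft (i + j)) _ _ fun x => ?_
      simp only [Equiv.subLeft_apply]
      rw [show i - (i + j - x) = x - j by ring, show j - (i + j - x) = x - i by ring]
      ring
    rw [L1, L2, R1, R2, E1, E2]

open DihedralGroup in
/-- any normalized ±1 cocycle on the dihedral group of order
`2m`, `m` odd, which is not a coboundary, has a normal cocyclic matrix. -/
theorem stmt_18 (m : ℕ) (hm : Odd m) [NeZero m]
    (ψ : DihedralGroup m → DihedralGroup m → ℤ)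
    (hval : ∀ g h, ψ g h = 1 ∨ ψ g h = -1)
    (hnorm : ψ 1 1 = 1)
    (hcoc : ∀ g h k, ψ g h * ψ (g * h) k = ψ g (h * k) * ψ h k)
    (hnotcob : ¬ ∃ φ : DihedralGroup m → ℤ, φ 1 = 1 ∧
      (∀ g, φ g = 1 ∨ φ g = -1) ∧ ∀ g h, ψ g h = φ g * φ h * φ (g * h)) :
    (Matrix.of ψ) * (Matrix.of ψ)ᵀ = (Matrix.of ψ)ᵀ * (Matrix.of ψ) := by
  obtain ⟨t, φ, htval, hφ1, hφval, h1, h2, h3, h4⟩ :=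
    stmt18_exists_phi hm ψ hval hnorm hcoc
  rcases htval with ht | ht
  · exfalso
    apply hnotcob
    refine ⟨φ, hφ1, hφval, ?_⟩
    rintro (i | i) (j | j)
    · rw [r_mul_r]; exact h1 i j
    · rw [r_mul_sr]; exact h2 i j
    · rw [sr_mul_r]; exact h3 i j
    · rw [sr_mul_sr]
      have h := h4 i j
      rw [ht, one_mul] at h
      exact h
  · subst ht
    ext g h
    simp only [Matrix.mul_apply, Matrix.transpose_apply, Matrix.of_apply]
    exact stmt18_keysum ψ φ
      (fun g => by rcases hφval g with h | h <;> rw [h] <;> norm_num)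
      h1 h2 h3 (fun i j => by rw [h4 i j]; ring) g h
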